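/- Assume t = d (so every tile T(τ) is a bounded parallelepiped), that T(τ) is nonempty, and that each vector A(𝐧_j) ∈ ℝ^k has integer coordinates. Then the set of distinct footprint-translation vectors P'(τ) = {A(δ_1·𝐧_1 + … + δ_d·𝐧_d) : δ ∈ ℤ^d and B⟨T(τ+δ)⟩ ∩ B⟨T(τ)⟩ ≠ ∅} is finite; consequently the set P(τ) = {W(δ) : δ ∈ ℤ^d and B⟨T(τ+δ)⟩ ∩ B⟨T(τ)⟩ ≠ ∅} of projected offsets is finite, i.e., only finitely many distinct footprints overlap the footprint of a given tile even though infinitely many tiles may do so. -/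

import Mathlib

open RealInnerProductSpace Pointwise

private lemma coord_abs_le_norm {k : ℕ} (w : EuclideanSpace ℝ (Fin k)) (l : Fin k) :
    |w l| ≤ ‖w‖ := by
  rw [EuclideanSpace.norm_eq]
  have h1 : |w l| = Real.sqrt (‖w l‖ ^ 2) := by
    rw [Real.sqrt_sq_eq_abs]; simp [Real.norm_eq_abs, abs_abs]
  rw [h1]
  apply Real.sqrt_le_sqrt
  exact Finset.single_le_sum (f := fun i => ‖w i‖ ^ 2) (fun i _ => by positivity)
    (Finset.mem_univ l)

private lemma intgrid_finite (k : ℕ) (C : ℝ) :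
    {w : EuclideanSpace ℝ (Fin k) | ‖w‖ ≤ C ∧ ∀ l, ∃ z : ℤ, w l = (z : ℝ)}.Finite := by
  have hfin : ({z : Fin k → ℤ | ∀ l, z l ∈ Set.Icc (⌈-C⌉) ⌊C⌋}).Finite := by
    have h := Set.Finite.pi (t := fun _ : Fin k => Set.Icc (⌈-C⌉) ⌊C⌋)
      (fun _ => Set.finite_Icc _ _)
    exact h.subset (fun z hz => Set.mem_univ_pi.mpr (fun l => hz l))
  apply Set.Finite.subset
    (hfin.image (fun z : Fin k → ℤ => (WithLp.toLp 2 (fun l => (z l : ℝ)) : EuclideanSpace ℝ (Fin k))))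
  rintro w ⟨hC, hz⟩
  choose z hzz using hz
  refine ⟨z, fun l => ?_, ?_⟩
  · have h1 : |w l| ≤ C := le_trans (coord_abs_le_norm w l) hC
    rw [hzz l, abs_le] at h1
    exact ⟨Int.ceil_le.mpr (by linarith [h1.1]), Int.le_floor.mpr h1.2⟩
  · ext l; exact (hzz l).symm

theorem finite_overlapping_footprints
    (d k : ℕ)
    (n : Fin d → EuclideanSpace ℝ (Fin d)) (hn : LinearIndependent ℝ n)
    (s : Fin d → ℝ) (hs : ∀ j, 0 < s j)
    (N : Fin d → EuclideanSpace ℝ (Fin d))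
    (hN : ∀ i j, ⟪N i, n j⟫ = if i = j then s j else 0)
    (A : EuclideanSpace ℝ (Fin d) →ₗ[ℝ] EuclideanSpace ℝ (Fin k))
    (b : EuclideanSpace ℝ (Fin k))
    (T : (Fin d → ℤ) → Set (EuclideanSpace ℝ (Fin d)))
    (hT : ∀ τ, T τ = {x | ∀ j, s j * (τ j : ℝ) ≤ ⟪x, n j⟫ ∧ ⟪x, n j⟫ < s j * ((τ j : ℝ) + 1)})
    (W : (Fin d → ℤ) → EuclideanSpace ℝ (Fin d))
    (hW : ∀ δ, W δ =
      (Submodule.orthogonalProjectionOnto (LinearMap.ker A)ᗮ (∑ j, (δ j : ℝ) • N j) :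
        EuclideanSpace ℝ (Fin d)))
    (τ : Fin d → ℤ) (hτ : (T τ).Nonempty)
    (hint : ∀ j l, ∃ z : ℤ, A (N j) l = (z : ℝ)) :
    {w : EuclideanSpace ℝ (Fin k) | ∃ δ : Fin d → ℤ,
        w = A (∑ j, (δ j : ℝ) • N j) ∧
        ((fun x => A x + b) '' T (τ + δ) ∩ (fun x => A x + b) '' T τ).Nonempty}.Finite ∧
    {w : EuclideanSpace ℝ (Fin d) | ∃ δ : Fin d → ℤ,
        w = W δ ∧
        ((fun x => A x + b) '' T (τ + δ) ∩ (fun x => A x + b) '' T τ).Nonempty}.Finite := by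
  classical
  set v : (Fin d → ℤ) → EuclideanSpace ℝ (Fin d) := fun δ => ∑ j, (δ j : ℝ) • N j with hv
  -- the coordinate map L
  set L : EuclideanSpace ℝ (Fin d) →ₗ[ℝ] EuclideanSpace ℝ (Fin d) :=
    { toFun := fun x => (WithLp.toLp 2 (fun l => ⟪x, n l⟫) : EuclideanSpace ℝ (Fin d))
      map_add' := by intro x y; ext l; simp [inner_add_left]
      map_smul' := by intro c x; ext l; simp [real_inner_smul_left, Finset.mul_sum, mul_assoc] } with hL
  have hLapp : ∀ x l, L x l = ⟪x, n l⟫ := fun x l => rfl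
  have hspan : Submodule.span ℝ (Set.range n) = ⊤ := by
    apply Submodule.eq_top_of_finrank_eq
    rw [finrank_span_eq_card hn, finrank_euclideanSpace_fin]
    simp
  have hinj : Function.Injective L := by
    rw [← LinearMap.ker_eq_bot, LinearMap.ker_eq_bot']
    intro x hx
    have hx' : ∀ j, ⟪x, n j⟫ = 0 := fun j => by have := congrArg (fun y => y j) hx; simpa [hLapp] using this
    have h2 : ∀ y ∈ Submodule.span ℝ (Set.range n), ⟪y, x⟫ = 0 := by
      intro y hy
      induction hy using Submodule.span_induction with
      | mem y hy => obtain ⟨j, rfl⟩ := hy; rw [real_inner_comm]; exact hx' j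
      | zero => simp
      | add _ _ _ _ h1 h2 => simp [inner_add_left, h1, h2]
      | smul _ _ _ h1 => simp [inner_smul_left, h1]
    have := h2 x (hspan ▸ Submodule.mem_top)
    exact inner_self_eq_zero.mp this
  let e : EuclideanSpace ℝ (Fin d) ≃ₗ[ℝ] EuclideanSpace ℝ (Fin d) :=
    LinearMap.linearEquivOfInjective L hinj rfl
  have heapp : ∀ x, e x = L x := fun x => rfl
  let ec : EuclideanSpace ℝ (Fin d) ≃L[ℝ] EuclideanSpace ℝ (Fin d) :=
    e.toContinuousLinearEquiv
  let esymm : EuclideanSpace ℝ (Fin d) →L[ℝ] EuclideanSpace ℝ (Fin d) := ec.symm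
  -- bound on T τ
  set M : ℝ := Real.sqrt (∑ j, (s j * (|(τ j : ℝ)| + 1)) ^ 2) with hM
  set C : ℝ := ‖esymm‖ * M with hCdef
  have hC : ∀ x ∈ T τ, ‖x‖ ≤ C := by
    intro x hx
    rw [hT] at hx
    have hLx : ‖L x‖ ≤ M := by
      rw [EuclideanSpace.norm_eq, hM]
      apply Real.sqrt_le_sqrt
      apply Finset.sum_le_sum
      intro j _
      have h := hx j
      have hb : |⟪x, n j⟫| ≤ s j * (|(τ j : ℝ)| + 1) := by
        rw [abs_le]
        constructor
        · nlinarith [neg_abs_le ((τ j : ℝ)), hs j, h.1, abs_nonneg ((τ j : ℝ))]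
        · nlinarith [le_abs_self ((τ j : ℝ)), hs j, h.2]
      have : ‖L x j‖ = |⟪x, n j⟫| := by rw [hLapp, Real.norm_eq_abs]
      rw [this]
      exact pow_le_pow_left₀ (abs_nonneg _) hb 2
    have hxe : esymm (e x) = x := by
      show ec.symm (ec x) = x
      exact ec.symm_apply_apply x
    calc ‖x‖ = ‖esymm (e x)‖ := by rw [hxe]
      _ ≤ ‖esymm‖ * ‖e x‖ := esymm.le_opNorm _
      _ ≤ ‖esymm‖ * M := by
          apply mul_le_mul_of_nonneg_left _ (norm_nonneg _)
          rw [heapp]; exact hLx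
  have hC0 : 0 ≤ C := by
    obtain ⟨x, hx⟩ := hτ
    exact le_trans (norm_nonneg x) (hC x hx)
  -- translation lemma
  have htrans : ∀ (δ : Fin d → ℤ) x, x ∈ T (τ + δ) → x - v δ ∈ T τ := by
    intro δ x hx
    rw [hT] at hx ⊢
    intro j
    have h := hx j
    have hinner : ⟪x - v δ, n j⟫ = ⟪x, n j⟫ - s j * (δ j : ℝ) := by
      rw [inner_sub_left, hv, sum_inner]
      have h1 : ∀ i, ⟪(δ i : ℝ) • N i, n j⟫ = if i = j then (δ i : ℝ) * s j else 0 := by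
        intro i
        rw [real_inner_smul_left, hN]
        split <;> simp
      rw [Finset.sum_congr rfl (fun i _ => h1 i)]
      simp [mul_comm]
    rw [hinner]
    have hcast : ((τ + δ) j : ℝ) = (τ j : ℝ) + (δ j : ℝ) := by
      simp [Pi.add_apply]
    rw [hcast] at h
    have e1 : s j * ((τ j : ℝ) + (δ j : ℝ)) = s j * (τ j : ℝ) + s j * (δ j : ℝ) := by ring
    have e2 : s j * (((τ j : ℝ) + (δ j : ℝ)) + 1) = s j * ((τ j : ℝ) + 1) + s j * (δ j : ℝ) := by
      ring
    constructor
    · linarith [h.1]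
    · linarith [h.2]
  -- continuous version of A
  let Ac : EuclideanSpace ℝ (Fin d) →L[ℝ] EuclideanSpace ℝ (Fin k) :=
    LinearMap.toContinuousLinearMap A
  have hAc : ∀ x, Ac x = A x := fun x => rfl
  -- overlap gives a norm bound
  have hover : ∀ δ : Fin d → ℤ,
      ((fun x => A x + b) '' T (τ + δ) ∩ (fun x => A x + b) '' T τ).Nonempty →
      ‖A (v δ)‖ ≤ 2 * (‖Ac‖ * C) := by
    rintro δ ⟨y, ⟨x₁, hx₁, hy₁⟩, ⟨x₂, hx₂, hy₂⟩⟩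
    have hA : A x₁ = A x₂ := by
      have : A x₁ + b = A x₂ + b := hy₁.trans hy₂.symm
      exact add_right_cancel this
    have h1 : x₁ - v δ ∈ T τ := htrans δ x₁ hx₁
    have hAv : A (v δ) = A x₂ - A (x₁ - v δ) := by
      rw [map_sub, hA]; abel
    have hb1 : ‖A x₂‖ ≤ ‖Ac‖ * C := by
      rw [← hAc]
      calc ‖Ac x₂‖ ≤ ‖Ac‖ * ‖x₂‖ := Ac.le_opNorm _
        _ ≤ ‖Ac‖ * C := mul_le_mul_of_nonneg_left (hC _ hx₂) (norm_nonneg _)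
    have hb2 : ‖A (x₁ - v δ)‖ ≤ ‖Ac‖ * C := by
      rw [← hAc]
      calc ‖Ac (x₁ - v δ)‖ ≤ ‖Ac‖ * ‖x₁ - v δ‖ := Ac.le_opNorm _
        _ ≤ ‖Ac‖ * C := mul_le_mul_of_nonneg_left (hC _ h1) (norm_nonneg _)
    calc ‖A (v δ)‖ = ‖A x₂ - A (x₁ - v δ)‖ := by rw [hAv]
      _ ≤ ‖A x₂‖ + ‖A (x₁ - v δ)‖ := norm_sub_le _ _
      _ ≤ 2 * (‖Ac‖ * C) := by linarith
  -- integer coordinates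
  have hcoord : ∀ (δ : Fin d → ℤ) l, ∃ z : ℤ, A (v δ) l = (z : ℝ) := by
    intro δ l
    choose z hz using hint
    refine ⟨∑ j, δ j * z j l, ?_⟩
    rw [hv, map_sum]
    simp only [map_smul]
    have : (∑ j, (δ j : ℝ) • A (N j)) l = ∑ j, (δ j : ℝ) * (A (N j) l) := by
      rw [WithLp.ofLp_sum, Finset.sum_apply]
      simp [PiLp.smul_apply, smul_eq_mul]
    rw [this]
    push_cast
    exact Finset.sum_congr rfl (fun j _ => by rw [hz j l])
  -- the first set is finite
  have hP' : {w : EuclideanSpace ℝ (Fin k) | ∃ δ : Fin d → ℤ,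
      w = A (∑ j, (δ j : ℝ) • N j) ∧
      ((fun x => A x + b) '' T (τ + δ) ∩ (fun x => A x + b) '' T τ).Nonempty}.Finite := by
    apply (intgrid_finite k (2 * (‖Ac‖ * C))).subset
    rintro w ⟨δ, rfl, hov⟩
    exact ⟨hover δ hov, hcoord δ⟩
  refine ⟨hP', ?_⟩
  -- A (W δ) = A (v δ)
  have hAW : ∀ δ, A (W δ) = A (v δ) := by
    intro δ
    have hk : v δ - (Submodule.orthogonalProjectionOnto (LinearMap.ker A)ᗮ (v δ) :
        EuclideanSpace ℝ (Fin d)) ∈ (LinearMap.ker A)ᗮᗮ :=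
      Submodule.sub_starProjection_mem_orthogonal _
    rw [Submodule.orthogonal_orthogonal] at hk
    have h0 : A (v δ) - A (W δ) = 0 := by
      rw [hW, ← map_sub]
      exact LinearMap.mem_ker.mp hk
    exact (sub_eq_zero.mp h0).symm
  apply Set.Finite.of_finite_image (f := fun w => A w)
  · apply hP'.subset
    rintro _ ⟨w, ⟨δ, rfl, hov⟩, rfl⟩
    refine ⟨δ, ?_, hov⟩
    show A (W δ) = A (∑ j, (δ j : ℝ) • N j)
    exact hAW δ
  · rintro w ⟨δ, rfl, _⟩ w' ⟨δ', rfl, _⟩ h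
    have h' : A (W δ) = A (W δ') := h
    have hm : W δ - W δ' ∈ (LinearMap.ker A)ᗮ := by
      rw [hW, hW]
      exact Submodule.sub_mem _ (SetLike.coe_mem _) (SetLike.coe_mem _)
    have hk : W δ - W δ' ∈ LinearMap.ker A := by
      rw [LinearMap.mem_ker, map_sub, h', sub_self]
    have h0 : W δ - W δ' ∈ (⊥ : Submodule ℝ (EuclideanSpace ℝ (Fin d))) :=
      (Submodule.orthogonal_disjoint (LinearMap.ker A)).le_bot
        (Submodule.mem_inf.mpr ⟨hk, hm⟩)
    exact sub_eq_zero.mp (Submodule.mem_bot _ |>.mp h0)
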